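/- arXiv:cs/0606082 — 2 statements merged into one kernel-verified Lean document; each statement's English description precedes it below -/
import Mathlib

section
/- In the Hamming Hamster-Wheel setting with r ∈ [1, m−1], the r-modification |' of the modified operator | satisfies |' = |_{D'}, i.e. V |' W = V |_{D'} W for all V, W ⊆ 𝒱, where D' is the r-modification of the Hamming Hamster-Wheel pseudo-distance D. -/
/-- `lt` is a strict total order on `C`. -/
def StrictTotalOrder' {C : Type*} (lt : C → C → Prop) : Prop :=
  (∀ c, ¬ lt c c) ∧ (∀ a b c, lt a b → lt b c → lt a c) ∧
  (∀ a b, a ≠ b → lt a b ∨ lt b a)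

/-- The operator induced by a pseudo-distance `⟨C, lt, d⟩`. -/
def inducedOp {𝒱 C : Type*} (lt : C → C → Prop) (d : 𝒱 → 𝒱 → C)
    (A B : Set 𝒱) : Set 𝒱 :=
  {w ∈ B | ∃ v ∈ A, ∀ v' ∈ A, ∀ w' ∈ B, lt (d v w) (d v' w') ∨ d v w = d v' w'}

/-- The set of atoms on which two valuations differ. -/
def hamSet {𝒜 T : Type*} (v w : 𝒜 → T) : Set 𝒜 := {p | v p ≠ w p}

open Classical in
/-- The valuation assigning `t1` to the atom `a0` and `t0` to every other atom. -/
noncomputable def unitVal {𝒜 T : Type*} (t0 t1 : T) (a0 : 𝒜) : 𝒜 → T :=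
  fun a => if a = a0 then t1 else t0

/-- The atoms `p 1, …, p m, q 1, …, q m` are `2m` pairwise distinct atoms. -/
def hamDistinctAtoms {𝒜 : Type*} (m : ℕ) (p q : ℕ → 𝒜) : Prop :=
  (∀ i ∈ Set.Icc 1 m, ∀ j ∈ Set.Icc 1 m, p i ≠ q j) ∧
  (∀ i ∈ Set.Icc 1 m, ∀ j ∈ Set.Icc 1 m, p i = p j → i = j) ∧
  (∀ i ∈ Set.Icc 1 m, ∀ j ∈ Set.Icc 1 m, q i = q j → i = j)

/-- `X = {v 1, …, v m, w 1, …, w m}`, where `v i = unitVal t0 t1 (p i)` and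
`w i = unitVal t0 t1 (q i)`. -/
noncomputable def hamX {𝒜 T : Type*} (m : ℕ) (p q : ℕ → 𝒜) (t0 t1 : T) : Set (𝒜 → T) :=
  {x | ∃ i ∈ Set.Icc 1 m, x = unitVal t0 t1 (p i) ∨ x = unitVal t0 t1 (q i)}

open Classical in
/-- The Hamming Hamster-Wheel pseudo-distance, with costs in `ℝ ∪ {∞}` (`WithTop ℝ`). -/
noncomputable def hamD {𝒜 T : Type*} (m : ℕ) (p q : ℕ → 𝒜) (t0 t1 : T)
    (a b : 𝒜 → T) : WithTop ℝ :=
  if a = b then 0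
  else if ({a, b} : Set (𝒜 → T)) ⊆ hamX m p q t0 t1 then
    (if (∃ i ∈ Set.Icc 1 m, ∃ j ∈ Set.Icc 1 m,
          a = unitVal t0 t1 (p i) ∧ b = unitVal t0 t1 (p j)) ∨
        (∃ i ∈ Set.Icc 1 m, ∃ j ∈ Set.Icc 1 m,
          a = unitVal t0 t1 (q i) ∧ b = unitVal t0 t1 (q j)) then ((2.1 : ℝ) : WithTop ℝ)
     else if ∃ i ∈ Set.Icc 1 m,
          ({a, b} : Set (𝒜 → T)) = {unitVal t0 t1 (p i), unitVal t0 t1 (q i)} then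
        ((2.4 : ℝ) : WithTop ℝ)
     else if ∃ i ∈ Set.Icc 1 m, ∃ j ∈ Set.Icc 1 m,
          ({a, b} : Set (𝒜 → T)) = {unitVal t0 t1 (p i), unitVal t0 t1 (q j)} ∧
          ((i : ℤ) - j).natAbs ∈ ({1, m - 1} : Set ℕ) then ((2.5 : ℝ) : WithTop ℝ)
     else ((2.2 : ℝ) : WithTop ℝ))
  else if (hamSet a b).Finite then
    (if (hamSet a b).ncard = 1 then ((1.4 : ℝ) : WithTop ℝ)
     else (((hamSet a b).ncard : ℝ) : WithTop ℝ))
  else ⊤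

open Classical in
/-- The modified Hamming Hamster-Wheel operator `|` on `𝒫(𝒱)`. -/
noncomputable def hamOp {𝒜 T : Type*} (m : ℕ) (p q : ℕ → 𝒜) (t0 t1 : T)
    (A B : Set (𝒜 → T)) : Set (𝒜 → T) :=
  if ∀ a ∈ A, ∀ b ∈ B, ({a, b} : Set (𝒜 → T)) ⊆ hamX m p q t0 t1 ∨
      (¬ (hamSet a b).Finite ∨ 3 ≤ (hamSet a b).ncard) then
    (if A ∩ hamX m p q t0 t1 = {unitVal t0 t1 (p m), unitVal t0 t1 (p 1)} ∧
        B ∩ hamX m p q t0 t1 = {unitVal t0 t1 (q m), unitVal t0 t1 (q 1)} then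
      {unitVal t0 t1 (q m)}
     else if A ∩ hamX m p q t0 t1 = {unitVal t0 t1 (q m), unitVal t0 t1 (q 1)} ∧
        B ∩ hamX m p q t0 t1 = {unitVal t0 t1 (p m), unitVal t0 t1 (p 1)} then
      {unitVal t0 t1 (p m)}
     else inducedOp (· < ·) (hamD m p q t0 t1) A B)
  else inducedOp (· < ·) (hamD m p q t0 t1) A B

open Classical in
/-- The `r`-modification `d'` of the Hamming Hamster-Wheel pseudo-distance. -/
noncomputable def hamD' {𝒜 T : Type*} (m : ℕ) (p q : ℕ → 𝒜) (t0 t1 : T) (r : ℕ)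
    (a b : 𝒜 → T) : WithTop ℝ :=
  if ∃ i ∈ Set.Icc (r + 1) m,
      ({a, b} : Set (𝒜 → T)) = {unitVal t0 t1 (p i), unitVal t0 t1 (q i)} then
    ((2.3 : ℝ) : WithTop ℝ)
  else hamD m p q t0 t1 a b

open Classical in
/-- The `r`-modification `|'` of the modified Hamming Hamster-Wheel operator. -/
noncomputable def hamOp' {𝒜 T : Type*} (m : ℕ) (p q : ℕ → 𝒜) (t0 t1 : T) (r : ℕ)
    (A B : Set (𝒜 → T)) : Set (𝒜 → T) :=
  if ∀ a ∈ A, ∀ b ∈ B, ({a, b} : Set (𝒜 → T)) ⊆ hamX m p q t0 t1 ∨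
      (¬ (hamSet a b).Finite ∨ 3 ≤ (hamSet a b).ncard) then
    (if A ∩ hamX m p q t0 t1 = {unitVal t0 t1 (p r), unitVal t0 t1 (p (r + 1))} ∧
        B ∩ hamX m p q t0 t1 = {unitVal t0 t1 (q r), unitVal t0 t1 (q (r + 1))} then
      {unitVal t0 t1 (q (r + 1))}
     else if A ∩ hamX m p q t0 t1 = {unitVal t0 t1 (q r), unitVal t0 t1 (q (r + 1))} ∧
        B ∩ hamX m p q t0 t1 = {unitVal t0 t1 (p r), unitVal t0 t1 (p (r + 1))} then
      {unitVal t0 t1 (p (r + 1))}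
     else hamOp m p q t0 t1 A B)
  else hamOp m p q t0 t1 A B

set_option linter.unusedVariables false
set_option linter.unusedSectionVars false

section Comp
variable {𝒜 T : Type*} {t0 t1 : T} {m : ℕ} {p q : ℕ → 𝒜}

lemma uv_inj (ht : t0 ≠ t1) {a b : 𝒜} (h : unitVal t0 t1 a = unitVal t0 t1 b) : a = b := by
  by_contra hne
  have h2 := congrFun h a
  simp only [unitVal, if_pos rfl] at h2
  rw [if_neg hne] at h2
  exact ht h2.symm

lemma uv_ne (ht : t0 ≠ t1) {a b : 𝒜} (h : a ≠ b) : unitVal t0 t1 a ≠ unitVal t0 t1 b :=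
  fun hc => h (uv_inj ht hc)

lemma v_mem_X {i : ℕ} (hi : i ∈ Set.Icc 1 m) :
    unitVal t0 t1 (p i) ∈ hamX m p q t0 t1 := ⟨i, hi, Or.inl rfl⟩

lemma w_mem_X {i : ℕ} (hi : i ∈ Set.Icc 1 m) :
    unitVal t0 t1 (q i) ∈ hamX m p q t0 t1 := ⟨i, hi, Or.inr rfl⟩

variable (ht : t0 ≠ t1) (hd : hamDistinctAtoms m p q)
include ht hd

lemma pq_ne {i j : ℕ} (hi : i ∈ Set.Icc 1 m) (hj : j ∈ Set.Icc 1 m) :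
    unitVal t0 t1 (p i) ≠ unitVal t0 t1 (q j) := uv_ne ht (hd.1 i hi j hj)

lemma pp_inj {i j : ℕ} (hi : i ∈ Set.Icc 1 m) (hj : j ∈ Set.Icc 1 m)
    (h : unitVal t0 t1 (p i) = unitVal t0 t1 (p j)) : i = j := hd.2.1 i hi j hj (uv_inj ht h)

lemma qq_inj {i j : ℕ} (hi : i ∈ Set.Icc 1 m) (hj : j ∈ Set.Icc 1 m)
    (h : unitVal t0 t1 (q i) = unitVal t0 t1 (q j)) : i = j := hd.2.2 i hi j hj (uv_inj ht h)

lemma pair_vw_eq {i j k l : ℕ} (hi : i ∈ Set.Icc 1 m) (hj : j ∈ Set.Icc 1 m)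
    (hk : k ∈ Set.Icc 1 m) (hl : l ∈ Set.Icc 1 m) :
    ({unitVal t0 t1 (p i), unitVal t0 t1 (q j)} : Set (𝒜 → T)) =
      {unitVal t0 t1 (p k), unitVal t0 t1 (q l)} ↔ i = k ∧ j = l := by
  rw [Set.pair_eq_pair_iff]
  constructor
  · rintro (⟨h1, h2⟩ | ⟨h1, h2⟩)
    · exact ⟨pp_inj ht hd hi hk h1, qq_inj ht hd hj hl h2⟩
    · exact absurd h1 (pq_ne ht hd hi hl)
  · rintro ⟨rfl, rfl⟩
    exact Or.inl ⟨rfl, rfl⟩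

lemma pair_wv_eq {i j k l : ℕ} (hi : i ∈ Set.Icc 1 m) (hj : j ∈ Set.Icc 1 m)
    (hk : k ∈ Set.Icc 1 m) (hl : l ∈ Set.Icc 1 m) :
    ({unitVal t0 t1 (q i), unitVal t0 t1 (p j)} : Set (𝒜 → T)) =
      {unitVal t0 t1 (p k), unitVal t0 t1 (q l)} ↔ j = k ∧ i = l := by
  rw [Set.pair_comm]
  exact pair_vw_eq ht hd hj hi hk hl

lemma pair_vv_ne {i j k l : ℕ} (hi : i ∈ Set.Icc 1 m) (hj : j ∈ Set.Icc 1 m)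
    (hk : k ∈ Set.Icc 1 m) (hl : l ∈ Set.Icc 1 m) :
    ({unitVal t0 t1 (p i), unitVal t0 t1 (p j)} : Set (𝒜 → T)) ≠
      {unitVal t0 t1 (p k), unitVal t0 t1 (q l)} := by
  intro hp
  rcases Set.pair_eq_pair_iff.mp hp with ⟨h1, h2⟩ | ⟨h1, h2⟩
  · exact pq_ne ht hd hj hl h2
  · exact pq_ne ht hd hi hl h1

lemma pair_ww_ne {i j k l : ℕ} (hi : i ∈ Set.Icc 1 m) (hj : j ∈ Set.Icc 1 m)
    (hk : k ∈ Set.Icc 1 m) (hl : l ∈ Set.Icc 1 m) :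
    ({unitVal t0 t1 (q i), unitVal t0 t1 (q j)} : Set (𝒜 → T)) ≠
      {unitVal t0 t1 (p k), unitVal t0 t1 (q l)} := by
  intro hp
  rcases Set.pair_eq_pair_iff.mp hp with ⟨h1, h2⟩ | ⟨h1, h2⟩
  · exact (pq_ne ht hd hk hi) h1.symm
  · exact (pq_ne ht hd hk hj) h2.symm

lemma d_vv {i j : ℕ} (hi : i ∈ Set.Icc 1 m) (hj : j ∈ Set.Icc 1 m) (hij : i ≠ j) :
    hamD m p q t0 t1 (unitVal t0 t1 (p i)) (unitVal t0 t1 (p j)) = ((2.1 : ℝ) : WithTop ℝ) := by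
  rw [hamD, if_neg (uv_ne ht (fun h => hij (hd.2.1 i hi j hj h))),
    if_pos (Set.pair_subset_iff.mpr ⟨v_mem_X hi, v_mem_X hj⟩),
    if_pos (Or.inl ⟨i, hi, j, hj, rfl, rfl⟩)]

lemma d_ww {i j : ℕ} (hi : i ∈ Set.Icc 1 m) (hj : j ∈ Set.Icc 1 m) (hij : i ≠ j) :
    hamD m p q t0 t1 (unitVal t0 t1 (q i)) (unitVal t0 t1 (q j)) = ((2.1 : ℝ) : WithTop ℝ) := by
  rw [hamD, if_neg (uv_ne ht (fun h => hij (hd.2.2 i hi j hj h))),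
    if_pos (Set.pair_subset_iff.mpr ⟨w_mem_X hi, w_mem_X hj⟩),
    if_pos (Or.inr ⟨i, hi, j, hj, rfl, rfl⟩)]

lemma d_vw {i j : ℕ} (hi : i ∈ Set.Icc 1 m) (hj : j ∈ Set.Icc 1 m) :
    hamD m p q t0 t1 (unitVal t0 t1 (p i)) (unitVal t0 t1 (q j)) =
      if i = j then ((2.4 : ℝ) : WithTop ℝ)
      else if ((i : ℤ) - j).natAbs ∈ ({1, m - 1} : Set ℕ) then ((2.5 : ℝ) : WithTop ℝ)
      else ((2.2 : ℝ) : WithTop ℝ) := by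
  have hc1 : ¬ ((∃ k ∈ Set.Icc 1 m, ∃ l ∈ Set.Icc 1 m,
        unitVal t0 t1 (p i) = unitVal t0 t1 (p k) ∧
          unitVal t0 t1 (q j) = unitVal t0 t1 (p l)) ∨
      (∃ k ∈ Set.Icc 1 m, ∃ l ∈ Set.Icc 1 m,
        unitVal t0 t1 (p i) = unitVal t0 t1 (q k) ∧
          unitVal t0 t1 (q j) = unitVal t0 t1 (q l))) := by
    rintro (⟨k, hk, l, hl, h1, h2⟩ | ⟨k, hk, l, hl, h1, h2⟩)
    · exact pq_ne ht hd hl hj h2.symm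
    · exact pq_ne ht hd hi hk h1
  rw [hamD, if_neg (pq_ne ht hd hi hj),
    if_pos (Set.pair_subset_iff.mpr ⟨v_mem_X hi, w_mem_X hj⟩), if_neg hc1]
  by_cases hij : i = j
  · rw [if_pos hij, if_pos ⟨i, hi, by rw [hij]⟩]
  · have h24 : ¬ ∃ k ∈ Set.Icc 1 m, ({unitVal t0 t1 (p i), unitVal t0 t1 (q j)} : Set (𝒜 → T)) =
        {unitVal t0 t1 (p k), unitVal t0 t1 (q k)} := by
      rintro ⟨k, hk, hp⟩
      obtain ⟨rfl, rfl⟩ := (pair_vw_eq ht hd hi hj hk hk).mp hp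
      exact hij rfl
    rw [if_neg hij, if_neg h24]
    by_cases habs : ((i : ℤ) - j).natAbs ∈ ({1, m - 1} : Set ℕ)
    · rw [if_pos habs, if_pos ⟨i, hi, j, hj, rfl, habs⟩]
    · rw [if_neg habs, if_neg (show ¬ _ by
        rintro ⟨k, hk, l, hl, hp, hab⟩
        obtain ⟨rfl, rfl⟩ := (pair_vw_eq ht hd hi hj hk hl).mp hp
        exact habs hab)]

end Comp
section Comp2
variable {𝒜 T : Type*} {t0 t1 : T} {m : ℕ} {p q : ℕ → 𝒜}

lemma hamSet_self (a : 𝒜 → T) : hamSet a a = ∅ := by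
  ext x; simp [hamSet]

lemma hamSet_ne {a b : 𝒜 → T} (h : a ≠ b) : hamSet a b ≠ ∅ := by
  intro he
  apply h
  funext x
  by_contra hx
  exact absurd he (Set.nonempty_iff_ne_empty.mp ⟨x, hx⟩)

lemma d_self (a : 𝒜 → T) : hamD m p q t0 t1 a a = 0 := by
  rw [hamD, if_pos rfl]

open Classical in
lemma d_notX {a b : 𝒜 → T} (hnx : ¬ ({a, b} : Set (𝒜 → T)) ⊆ hamX m p q t0 t1)
    (hne : a ≠ b) :
    hamD m p q t0 t1 a b = if (hamSet a b).Finite then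
      (if (hamSet a b).ncard = 1 then ((1.4 : ℝ) : WithTop ℝ)
       else (((hamSet a b).ncard : ℝ) : WithTop ℝ)) else ⊤ := by
  rw [hamD, if_neg hne, if_neg hnx]

variable (ht : t0 ≠ t1) (hd : hamDistinctAtoms m p q)
include ht hd

lemma d_wv {i j : ℕ} (hi : i ∈ Set.Icc 1 m) (hj : j ∈ Set.Icc 1 m) :
    hamD m p q t0 t1 (unitVal t0 t1 (q i)) (unitVal t0 t1 (p j)) =
      if i = j then ((2.4 : ℝ) : WithTop ℝ)
      else if ((i : ℤ) - j).natAbs ∈ ({1, m - 1} : Set ℕ) then ((2.5 : ℝ) : WithTop ℝ)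
      else ((2.2 : ℝ) : WithTop ℝ) := by
  have hc1 : ¬ ((∃ k ∈ Set.Icc 1 m, ∃ l ∈ Set.Icc 1 m,
        unitVal t0 t1 (q i) = unitVal t0 t1 (p k) ∧
          unitVal t0 t1 (p j) = unitVal t0 t1 (p l)) ∨
      (∃ k ∈ Set.Icc 1 m, ∃ l ∈ Set.Icc 1 m,
        unitVal t0 t1 (q i) = unitVal t0 t1 (q k) ∧
          unitVal t0 t1 (p j) = unitVal t0 t1 (q l))) := by
    rintro (⟨k, hk, l, hl, h1, h2⟩ | ⟨k, hk, l, hl, h1, h2⟩)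
    · exact pq_ne ht hd hk hi h1.symm
    · exact pq_ne ht hd hj hl h2
  rw [hamD, if_neg (Ne.symm (pq_ne ht hd hj hi)),
    if_pos (Set.pair_subset_iff.mpr ⟨w_mem_X hi, v_mem_X hj⟩), if_neg hc1]
  by_cases hij : i = j
  · rw [if_pos hij, if_pos ⟨i, hi, by rw [hij, Set.pair_comm]⟩]
  · have h24 : ¬ ∃ k ∈ Set.Icc 1 m, ({unitVal t0 t1 (q i), unitVal t0 t1 (p j)} : Set (𝒜 → T)) =
        {unitVal t0 t1 (p k), unitVal t0 t1 (q k)} := by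
      rintro ⟨k, hk, hp⟩
      obtain ⟨rfl, rfl⟩ := (pair_wv_eq ht hd hi hj hk hk).mp hp
      exact hij rfl
    rw [if_neg hij, if_neg h24]
    have habs' : (((j : ℤ) - i).natAbs ∈ ({1, m - 1} : Set ℕ)) ↔
        (((i : ℤ) - j).natAbs ∈ ({1, m - 1} : Set ℕ)) := by
      have : ((j : ℤ) - i).natAbs = ((i : ℤ) - j).natAbs := by omega
      rw [this]
    by_cases habs : ((i : ℤ) - j).natAbs ∈ ({1, m - 1} : Set ℕ)
    · rw [if_pos habs, if_pos ⟨j, hj, i, hi, Set.pair_comm _ _, habs'.mpr habs⟩]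
    · rw [if_neg habs, if_neg (show ¬ _ by
        rintro ⟨k, hk, l, hl, hp, hab⟩
        obtain ⟨rfl, rfl⟩ := (pair_wv_eq ht hd hi hj hk hl).mp hp
        exact habs (habs'.mp hab))]

variable {r : ℕ} (hr1 : 1 ≤ r)

lemma d'_vw (hr1 : 1 ≤ r) {i j : ℕ} (hi : i ∈ Set.Icc 1 m) (hj : j ∈ Set.Icc 1 m) :
    hamD' m p q t0 t1 r (unitVal t0 t1 (p i)) (unitVal t0 t1 (q j)) =
      if i = j ∧ r + 1 ≤ i then ((2.3 : ℝ) : WithTop ℝ)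
      else hamD m p q t0 t1 (unitVal t0 t1 (p i)) (unitVal t0 t1 (q j)) := by
  rw [hamD']
  by_cases hc : i = j ∧ r + 1 ≤ i
  · rw [if_pos hc, if_pos ⟨i, ⟨hc.2, hi.2⟩, by rw [hc.1]⟩]
  · rw [if_neg hc, if_neg (show ¬ _ by
      rintro ⟨k, hk, hp⟩
      have hk' : k ∈ Set.Icc 1 m := ⟨le_trans (by omega) hk.1, hk.2⟩
      obtain ⟨rfl, rfl⟩ := (pair_vw_eq ht hd hi hj hk' hk').mp hp
      exact hc ⟨rfl, hk.1⟩)]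

lemma d'_wv (hr1 : 1 ≤ r) {i j : ℕ} (hi : i ∈ Set.Icc 1 m) (hj : j ∈ Set.Icc 1 m) :
    hamD' m p q t0 t1 r (unitVal t0 t1 (q i)) (unitVal t0 t1 (p j)) =
      if i = j ∧ r + 1 ≤ i then ((2.3 : ℝ) : WithTop ℝ)
      else hamD m p q t0 t1 (unitVal t0 t1 (q i)) (unitVal t0 t1 (p j)) := by
  rw [hamD']
  by_cases hc : i = j ∧ r + 1 ≤ i
  · rw [if_pos hc, if_pos ⟨i, ⟨hc.2, hi.2⟩, by rw [hc.1, Set.pair_comm]⟩]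
  · rw [if_neg hc, if_neg (show ¬ _ by
      rintro ⟨k, hk, hp⟩
      have hk' : k ∈ Set.Icc 1 m := ⟨le_trans (by omega) hk.1, hk.2⟩
      obtain ⟨rfl, rfl⟩ := (pair_wv_eq ht hd hi hj hk' hk').mp hp
      exact hc ⟨rfl, hk.1⟩)]

lemma d'_vv (hr1 : 1 ≤ r) {i j : ℕ} (hi : i ∈ Set.Icc 1 m) (hj : j ∈ Set.Icc 1 m) :
    hamD' m p q t0 t1 r (unitVal t0 t1 (p i)) (unitVal t0 t1 (p j)) =
      hamD m p q t0 t1 (unitVal t0 t1 (p i)) (unitVal t0 t1 (p j)) := by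
  rw [hamD', if_neg (show ¬ _ by
    rintro ⟨k, hk, hp⟩
    have hk' : k ∈ Set.Icc 1 m := ⟨le_trans (by omega) hk.1, hk.2⟩
    exact pair_vv_ne ht hd hi hj hk' hk' hp)]

lemma d'_ww (hr1 : 1 ≤ r) {i j : ℕ} (hi : i ∈ Set.Icc 1 m) (hj : j ∈ Set.Icc 1 m) :
    hamD' m p q t0 t1 r (unitVal t0 t1 (q i)) (unitVal t0 t1 (q j)) =
      hamD m p q t0 t1 (unitVal t0 t1 (q i)) (unitVal t0 t1 (q j)) := by
  rw [hamD', if_neg (show ¬ _ by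
    rintro ⟨k, hk, hp⟩
    have hk' : k ∈ Set.Icc 1 m := ⟨le_trans (by omega) hk.1, hk.2⟩
    exact pair_ww_ne ht hd hi hj hk' hk' hp)]

omit ht hd

lemma d'_notX {r : ℕ} {a b : 𝒜 → T} (hnx : ¬ ({a, b} : Set (𝒜 → T)) ⊆ hamX m p q t0 t1) :
    hamD' m p q t0 t1 r a b = hamD m p q t0 t1 a b := by
  rw [hamD', if_neg (show ¬ _ by
    rintro ⟨k, hk, hp⟩
    exact hnx (hp ▸ Set.pair_subset_iff.mpr
      ⟨v_mem_X ⟨le_trans (by omega) hk.1, hk.2⟩, w_mem_X ⟨le_trans (by omega) hk.1, hk.2⟩⟩))]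

include ht hd

lemma d'_self {r : ℕ} (a : 𝒜 → T) : hamD' m p q t0 t1 r a a = 0 := by
  rw [hamD', if_neg (show ¬ _ by
    rintro ⟨k, hk, hp⟩
    have h1 : unitVal t0 t1 (p k) = a := by
      have : unitVal t0 t1 (p k) ∈ ({a, a} : Set (𝒜 → T)) := hp ▸ Set.mem_insert _ _
      simpa using this
    have h2 : unitVal t0 t1 (q k) = a := by
      have : unitVal t0 t1 (q k) ∈ ({a, a} : Set (𝒜 → T)) := hp ▸ Set.mem_insert_of_mem _ rfl
      simpa using this
    exact uv_ne ht (hd.1 k ⟨hk.1.trans' (by omega), hk.2⟩ k ⟨hk.1.trans' (by omega), hk.2⟩)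
      (h1.trans h2.symm)), d_self]

end Comp2
section Ops
variable {𝒱 γ : Type*} [LinearOrder γ] {d e : 𝒱 → 𝒱 → γ} {A B : Set 𝒱}

lemma mem_inducedOp {b : 𝒱} :
    b ∈ inducedOp (· < ·) d A B ↔
      b ∈ B ∧ ∃ a ∈ A, ∀ a' ∈ A, ∀ b' ∈ B, d a b ≤ d a' b' := by
  simp only [inducedOp, Set.mem_setOf_eq, Set.mem_sep_iff]
  constructor
  · rintro ⟨hb, a, ha, h⟩
    exact ⟨hb, a, ha, fun a' ha' b' hb' => le_iff_lt_or_eq.mpr (h a' ha' b' hb')⟩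
  · rintro ⟨hb, a, ha, h⟩
    exact ⟨hb, a, ha, fun a' ha' b' hb' => le_iff_lt_or_eq.mp (h a' ha' b' hb')⟩

lemma inducedOp_congr (h : ∀ a ∈ A, ∀ b ∈ B, d a b = e a b) :
    inducedOp (· < ·) d A B = inducedOp (· < ·) e A B := by
  ext b
  rw [mem_inducedOp, mem_inducedOp]
  constructor <;> rintro ⟨hb, a, ha, hmin⟩ <;> refine ⟨hb, a, ha, fun a' ha' b' hb' => ?_⟩
  · rw [← h a ha b hb, ← h a' ha' b' hb']; exact hmin a' ha' b' hb'
  · rw [h a ha b hb, h a' ha' b' hb']; exact hmin a' ha' b' hb'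

lemma inducedOp_low_subset {c : γ} {a₀ b₀ : 𝒱} (ha₀ : a₀ ∈ A) (hb₀ : b₀ ∈ B)
    (h0 : d a₀ b₀ = e a₀ b₀) (hlt : d a₀ b₀ < c)
    (hch : ∀ a ∈ A, ∀ b ∈ B, d a b ≠ e a b → c ≤ d a b ∧ c ≤ e a b) :
    inducedOp (· < ·) d A B ⊆ inducedOp (· < ·) e A B := by
  intro b hb
  rw [mem_inducedOp] at hb ⊢
  obtain ⟨hbB, a, ha, hmin⟩ := hb
  have hlow : d a b < c := lt_of_le_of_lt (hmin a₀ ha₀ b₀ hb₀) hlt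
  have heq : d a b = e a b := by
    by_contra hne
    exact absurd hlow (not_lt.mpr (hch a ha b hbB hne).1)
  refine ⟨hbB, a, ha, fun a' ha' b' hb' => ?_⟩
  by_cases hne' : d a' b' = e a' b'
  · rw [← heq, ← hne']; exact hmin a' ha' b' hb'
  · rw [← heq]; exact le_of_lt (lt_of_lt_of_le hlow (hch a' ha' b' hb' hne').2)

lemma inducedOp_low {c : γ} {a₀ b₀ : 𝒱} (ha₀ : a₀ ∈ A) (hb₀ : b₀ ∈ B)
    (h0 : d a₀ b₀ = e a₀ b₀) (hlt : d a₀ b₀ < c)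
    (hch : ∀ a ∈ A, ∀ b ∈ B, d a b ≠ e a b → c ≤ d a b ∧ c ≤ e a b) :
    inducedOp (· < ·) d A B = inducedOp (· < ·) e A B :=
  Set.Subset.antisymm
    (inducedOp_low_subset ha₀ hb₀ h0 hlt hch)
    (inducedOp_low_subset ha₀ hb₀ h0.symm (h0 ▸ hlt)
      (fun a ha b hb hne => ((hch a ha b hb (Ne.symm hne)).symm)))

lemma inducedOp_high {x y : γ} {a₀ b₀ : 𝒱} (ha₀ : a₀ ∈ A) (hb₀ : b₀ ∈ B)
    (hyx : y < x) (h0 : d a₀ b₀ = x)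
    (hiff : ∀ a ∈ A, ∀ b ∈ B, (d a b = x ↔ e a b = y))
    (hother : ∀ a ∈ A, ∀ b ∈ B, d a b ≠ x → x < d a b ∧ e a b = d a b) :
    inducedOp (· < ·) d A B = inducedOp (· < ·) e A B := by
  ext b
  rw [mem_inducedOp, mem_inducedOp]
  constructor
  · rintro ⟨hbB, a, ha, hmin⟩
    have hx : d a b = x := by
      by_contra hne
      exact absurd (hmin a₀ ha₀ b₀ hb₀) (not_le.mpr (h0 ▸ (hother a ha b hbB hne).1))
    have hy : e a b = y := (hiff a ha b hbB).mp hx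
    refine ⟨hbB, a, ha, fun a' ha' b' hb' => ?_⟩
    by_cases hne' : d a' b' = x
    · rw [hy, (hiff a' ha' b' hb').mp hne']
    · rw [hy, (hother a' ha' b' hb' hne').2]
      exact le_of_lt (lt_trans hyx (hother a' ha' b' hb' hne').1)
  · rintro ⟨hbB, a, ha, hmin⟩
    have hy : e a b = y := by
      by_contra hne
      have hd : d a b ≠ x := fun hc => hne ((hiff a ha b hbB).mp hc)
      have h1 : e a b ≤ e a₀ b₀ := hmin a₀ ha₀ b₀ hb₀
      rw [(hiff a₀ ha₀ b₀ hb₀).mp h0] at h1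
      have h2 := (hother a ha b hbB hd).1
      rw [← (hother a ha b hbB hd).2] at h2
      exact absurd (lt_trans hyx h2) (not_lt.mpr h1)
    have hx : d a b = x := (hiff a ha b hbB).mpr hy
    refine ⟨hbB, a, ha, fun a' ha' b' hb' => ?_⟩
    by_cases hne' : d a' b' = x
    · rw [hx, hne']
    · rw [hx]; exact le_of_lt (hother a' ha' b' hb' hne').1

lemma inducedOp_uniq {c : γ} {a₀ b₀ : 𝒱} (ha₀ : a₀ ∈ A) (hb₀ : b₀ ∈ B)
    (h0 : d a₀ b₀ = c) (hmin : ∀ a ∈ A, ∀ b ∈ B, c ≤ d a b)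
    (huniq : ∀ a ∈ A, ∀ b ∈ B, d a b = c → b = b₀) :
    inducedOp (· < ·) d A B = {b₀} := by
  ext b
  rw [mem_inducedOp, Set.mem_singleton_iff]
  constructor
  · rintro ⟨hbB, a, ha, hm⟩
    exact huniq a ha b hbB (le_antisymm (h0 ▸ hm a₀ ha₀ b₀ hb₀) (hmin a ha b hbB))
  · rintro rfl
    exact ⟨hb₀, a₀, ha₀, fun a' ha' b' hb' => h0 ▸ hmin a' ha' b' hb'⟩

end Ops
section Gen
variable {𝒜 T : Type*} {t0 t1 : T} {m : ℕ} {p q : ℕ → 𝒜}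

lemma wc_lt {x y : ℝ} (h : x < y) : ((x : ℝ) : WithTop ℝ) < ((y : ℝ) : WithTop ℝ) :=
  WithTop.coe_lt_coe.mpr h

lemma wc_le {x y : ℝ} (h : x ≤ y) : ((x : ℝ) : WithTop ℝ) ≤ ((y : ℝ) : WithTop ℝ) :=
  WithTop.coe_le_coe.mpr h

lemma wc_ne {x y : ℝ} (h : x ≠ y) : ((x : ℝ) : WithTop ℝ) ≠ ((y : ℝ) : WithTop ℝ) :=
  fun hc => h (WithTop.coe_inj.mp hc)

lemma hamSet_cond_ne {a b : 𝒜 → T} (h3 : ¬ (hamSet a b).Finite ∨ 3 ≤ (hamSet a b).ncard) :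
    a ≠ b := by
  rintro rfl
  rw [hamSet_self] at h3
  rcases h3 with h3 | h3
  · exact h3 Set.finite_empty
  · rw [Set.ncard_empty] at h3; omega

lemma d_notX_ge3 {a b : 𝒜 → T} (hnx : ¬ ({a, b} : Set (𝒜 → T)) ⊆ hamX m p q t0 t1)
    (h3 : ¬ (hamSet a b).Finite ∨ 3 ≤ (hamSet a b).ncard) :
    ((3 : ℝ) : WithTop ℝ) ≤ hamD m p q t0 t1 a b := by
  rw [d_notX hnx (hamSet_cond_ne h3)]
  by_cases hfin : (hamSet a b).Finite
  · rcases h3 with h3 | h3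
    · exact absurd hfin h3
    · rw [if_pos hfin, if_neg (by omega)]
      exact_mod_cast (by exact_mod_cast h3 : (3 : ℝ) ≤ ((hamSet a b).ncard : ℝ))
  · rw [if_neg hfin]; exact le_top

variable (ht : t0 ≠ t1) (hd : hamDistinctAtoms m p q)
include ht hd

/-- classification of `hamD` values for pairs satisfying the case-(i) condition. -/
lemma d_val {a b : 𝒜 → T}
    (hcase : ({a, b} : Set (𝒜 → T)) ⊆ hamX m p q t0 t1 ∨
      (¬ (hamSet a b).Finite ∨ 3 ≤ (hamSet a b).ncard))
    (hne : a ≠ b) :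
    hamD m p q t0 t1 a b = ((2.1 : ℝ) : WithTop ℝ) ∨
    hamD m p q t0 t1 a b = ((2.2 : ℝ) : WithTop ℝ) ∨
    hamD m p q t0 t1 a b = ((2.4 : ℝ) : WithTop ℝ) ∨
    hamD m p q t0 t1 a b = ((2.5 : ℝ) : WithTop ℝ) ∨
    ((3 : ℝ) : WithTop ℝ) ≤ hamD m p q t0 t1 a b := by
  by_cases hX : ({a, b} : Set (𝒜 → T)) ⊆ hamX m p q t0 t1
  · rw [Set.pair_subset_iff] at hX
    obtain ⟨i, hi, ha | ha⟩ := hX.1 <;> obtain ⟨j, hj, hb | hb⟩ := hX.2 <;> subst ha <;> subst hb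
    · exact Or.inl (d_vv ht hd hi hj (fun hc => hne (by rw [hc])))
    · rw [d_vw ht hd hi hj]
      by_cases hij : i = j
      · rw [if_pos hij]; tauto
      · rw [if_neg hij]
        by_cases habs : ((i : ℤ) - j).natAbs ∈ ({1, m - 1} : Set ℕ)
        · rw [if_pos habs]; tauto
        · rw [if_neg habs]; tauto
    · rw [d_wv ht hd hi hj]
      by_cases hij : i = j
      · rw [if_pos hij]; tauto
      · rw [if_neg hij]
        by_cases habs : ((i : ℤ) - j).natAbs ∈ ({1, m - 1} : Set ℕ)
        · rw [if_pos habs]; tauto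
        · rw [if_neg habs]; tauto
    · exact Or.inl (d_ww ht hd hi hj (fun hc => hne (by rw [hc])))
  · rcases hcase with hcase | hcase
    · exact absurd hcase hX
    · exact Or.inr (Or.inr (Or.inr (Or.inr (d_notX_ge3 hX hcase))))

/-- if `hamD a b = 2.4` (under the case-(i) condition), then `{a,b} = {v i, w i}`. -/
lemma d24_pair {a b : 𝒜 → T}
    (hcase : ({a, b} : Set (𝒜 → T)) ⊆ hamX m p q t0 t1 ∨
      (¬ (hamSet a b).Finite ∨ 3 ≤ (hamSet a b).ncard))
    (h24 : hamD m p q t0 t1 a b = ((2.4 : ℝ) : WithTop ℝ)) :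
    ∃ i ∈ Set.Icc 1 m, (a = unitVal t0 t1 (p i) ∧ b = unitVal t0 t1 (q i)) ∨
      (a = unitVal t0 t1 (q i) ∧ b = unitVal t0 t1 (p i)) := by
  have hne : a ≠ b := by
    rintro rfl
    rw [d_self] at h24
    rw [show (0 : WithTop ℝ) = ((0:ℝ) : WithTop ℝ) from WithTop.coe_zero.symm] at h24
    exact (wc_ne (show (0:ℝ) ≠ 2.4 by norm_num)) h24
  by_cases hX : ({a, b} : Set (𝒜 → T)) ⊆ hamX m p q t0 t1
  · rw [Set.pair_subset_iff] at hX
    obtain ⟨i, hi, ha | ha⟩ := hX.1 <;> obtain ⟨j, hj, hb | hb⟩ := hX.2 <;> subst ha <;> subst hb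
    · rw [d_vv ht hd hi hj (fun hc => hne (by rw [hc]))] at h24
      exact absurd h24 (wc_ne (by norm_num))
    · rw [d_vw ht hd hi hj] at h24
      by_cases hij : i = j
      · exact ⟨i, hi, Or.inl ⟨rfl, by rw [hij]⟩⟩
      · rw [if_neg hij] at h24
        by_cases habs : ((i : ℤ) - j).natAbs ∈ ({1, m - 1} : Set ℕ)
        · rw [if_pos habs] at h24; exact absurd h24 (wc_ne (by norm_num))
        · rw [if_neg habs] at h24; exact absurd h24 (wc_ne (by norm_num))
    · rw [d_wv ht hd hi hj] at h24
      by_cases hij : i = j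
      · exact ⟨i, hi, Or.inr ⟨rfl, by rw [hij]⟩⟩
      · rw [if_neg hij] at h24
        by_cases habs : ((i : ℤ) - j).natAbs ∈ ({1, m - 1} : Set ℕ)
        · rw [if_pos habs] at h24; exact absurd h24 (wc_ne (by norm_num))
        · rw [if_neg habs] at h24; exact absurd h24 (wc_ne (by norm_num))
    · rw [d_ww ht hd hi hj (fun hc => hne (by rw [hc]))] at h24
      exact absurd h24 (wc_ne (by norm_num))
  · rcases hcase with hcase | hcase
    · exact absurd hcase hX
    · have := d_notX_ge3 (p := p) (q := q) (t0 := t0) (t1 := t1) (m := m) hX hcase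
      rw [h24] at this
      exact absurd this (not_le.mpr (wc_lt (by norm_num)))

/-- characterization of changed pairs. -/
lemma d_changed {r : ℕ} (hr1 : 1 ≤ r) {a b : 𝒜 → T}
    (h : hamD' m p q t0 t1 r a b ≠ hamD m p q t0 t1 a b) :
    ∃ i, r + 1 ≤ i ∧ i ≤ m ∧
      ((a = unitVal t0 t1 (p i) ∧ b = unitVal t0 t1 (q i)) ∨
       (a = unitVal t0 t1 (q i) ∧ b = unitVal t0 t1 (p i))) ∧
      hamD m p q t0 t1 a b = ((2.4 : ℝ) : WithTop ℝ) ∧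
      hamD' m p q t0 t1 r a b = ((2.3 : ℝ) : WithTop ℝ) := by
  by_cases hc : ∃ i ∈ Set.Icc (r + 1) m,
      ({a, b} : Set (𝒜 → T)) = {unitVal t0 t1 (p i), unitVal t0 t1 (q i)}
  · obtain ⟨i, hi, hp⟩ := hc
    have hi' : i ∈ Set.Icc 1 m := ⟨le_trans (by omega) hi.1, hi.2⟩
    have h23 : hamD' m p q t0 t1 r a b = ((2.3 : ℝ) : WithTop ℝ) := by
      rw [hamD', if_pos ⟨i, hi, hp⟩]
    rcases Set.pair_eq_pair_iff.mp hp with ⟨h1, h2⟩ | ⟨h1, h2⟩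
    · refine ⟨i, hi.1, hi.2, Or.inl ⟨h1, h2⟩, ?_, h23⟩
      rw [h1, h2, d_vw ht hd hi' hi', if_pos rfl]
    · refine ⟨i, hi.1, hi.2, Or.inr ⟨h1, h2⟩, ?_, h23⟩
      rw [h1, h2, d_wv ht hd hi' hi', if_pos rfl]
  · exact absurd (by rw [hamD', if_neg hc]) h

end Gen
section Gen2
variable {𝒜 T : Type*} {t0 t1 : T} {m : ℕ} {p q : ℕ → 𝒜}

lemma zero_lt_23 : (0 : WithTop ℝ) < ((2.3 : ℝ) : WithTop ℝ) := by
  rw [show (0 : WithTop ℝ) = ((0 : ℝ) : WithTop ℝ) from WithTop.coe_zero.symm]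
  exact wc_lt (by norm_num)

/-- Core combinatorial lemma: if the equal-index pairs `(VV i₀, WW i₀)`, `(VV i₁, WW i₁)`
are split across `A`, `B`, and no pair realizes a distance `< 2.3`, then
`A ∩ X` and `B ∩ X` are forced. -/
lemma interX_eq {A B : Set (𝒜 → T)} (VV WW : ℕ → (𝒜 → T)) {i₀ i₁ : ℕ}
    (hi₀ : i₀ ∈ Set.Icc 1 m) (hi₁ : i₁ ∈ Set.Icc 1 m)
    (hVX : ∀ j ∈ Set.Icc 1 m, VV j ∈ hamX m p q t0 t1)
    (hWX : ∀ j ∈ Set.Icc 1 m, WW j ∈ hamX m p q t0 t1)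
    (hmemX : ∀ x ∈ hamX m p q t0 t1, ∃ j ∈ Set.Icc 1 m, x = VV j ∨ x = WW j)
    (hVVd : ∀ j k, j ∈ Set.Icc 1 m → k ∈ Set.Icc 1 m → j ≠ k →
      hamD m p q t0 t1 (VV j) (VV k) = ((2.1 : ℝ) : WithTop ℝ))
    (hWWd : ∀ j k, j ∈ Set.Icc 1 m → k ∈ Set.Icc 1 m → j ≠ k →
      hamD m p q t0 t1 (WW j) (WW k) = ((2.1 : ℝ) : WithTop ℝ))
    (hVWd : ∀ j k, j ∈ Set.Icc 1 m → k ∈ Set.Icc 1 m →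
      hamD m p q t0 t1 (VV j) (WW k) =
        if j = k then ((2.4 : ℝ) : WithTop ℝ)
        else if ((j : ℤ) - k).natAbs ∈ ({1, m - 1} : Set ℕ) then ((2.5 : ℝ) : WithTop ℝ)
        else ((2.2 : ℝ) : WithTop ℝ))
    (hnolow : ∀ a ∈ A, ∀ b ∈ B, ¬ hamD m p q t0 t1 a b < ((2.3 : ℝ) : WithTop ℝ))
    (haA : VV i₀ ∈ A) (ha₂ : VV i₁ ∈ A) (hbB : WW i₀ ∈ B) (hb₂ : WW i₁ ∈ B)
    (hidx : ∀ j, 1 ≤ j → j ≤ m →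
      (j = i₀ ∨ ((j : ℤ) - i₀).natAbs = 1 ∨ ((j : ℤ) - i₀).natAbs = m - 1) →
      (j = i₁ ∨ ((j : ℤ) - i₁).natAbs = 1 ∨ ((j : ℤ) - i₁).natAbs = m - 1) →
      j = i₀ ∨ j = i₁) :
    A ∩ hamX m p q t0 t1 = {VV i₀, VV i₁} ∧ B ∩ hamX m p q t0 t1 = {WW i₀, WW i₁} := by
  have hcond : ∀ j k, j ∈ Set.Icc 1 m → k ∈ Set.Icc 1 m →
      ¬ hamD m p q t0 t1 (VV j) (WW k) < ((2.3 : ℝ) : WithTop ℝ) →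
      (j = k ∨ ((j : ℤ) - k).natAbs = 1 ∨ ((j : ℤ) - k).natAbs = m - 1) := by
    intro j k hj hk h
    rw [hVWd j k hj hk] at h
    by_cases hjk : j = k
    · exact Or.inl hjk
    · rw [if_neg hjk] at h
      by_cases habs : ((j : ℤ) - k).natAbs ∈ ({1, m - 1} : Set ℕ)
      · simp only [Set.mem_insert_iff, Set.mem_singleton_iff] at habs
        exact Or.inr habs
      · rw [if_neg habs] at h
        exact absurd (wc_lt (by norm_num)) h
  constructor
  · apply Set.Subset.antisymm
    · rintro x ⟨hxA, hxX⟩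
      obtain ⟨j, hj, rfl | rfl⟩ := hmemX x hxX
      · have c0 := hcond j i₀ hj hi₀ (hnolow _ hxA _ hbB)
        have c1 := hcond j i₁ hj hi₁ (hnolow _ hxA _ hb₂)
        rcases hidx j hj.1 hj.2 c0 c1 with rfl | rfl
        · exact Set.mem_insert _ _
        · exact Set.mem_insert_of_mem _ rfl
      · exfalso
        by_cases hji : j = i₀
        · subst hji
          have h := hnolow _ hxA _ hbB
          rw [d_self] at h
          exact h zero_lt_23
        · have h := hnolow _ hxA _ hbB
          rw [hWWd j i₀ hj hi₀ hji] at h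
          exact h (wc_lt (by norm_num))
    · intro x hx
      rcases hx with rfl | hx
      · exact ⟨haA, hVX _ hi₀⟩
      · rw [Set.mem_singleton_iff] at hx
        subst hx
        exact ⟨ha₂, hVX _ hi₁⟩
  · apply Set.Subset.antisymm
    · rintro y ⟨hyB, hyX⟩
      obtain ⟨j, hj, rfl | rfl⟩ := hmemX y hyX
      · exfalso
        by_cases hji : i₀ = j
        · subst hji
          have h := hnolow _ haA _ hyB
          rw [d_self] at h
          exact h zero_lt_23
        · have h := hnolow _ haA _ hyB
          rw [hVVd i₀ j hi₀ hj hji] at h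
          exact h (wc_lt (by norm_num))
      · have c0 := hcond i₀ j hi₀ hj (hnolow _ haA _ hyB)
        have c1 := hcond i₁ j hi₁ hj (hnolow _ ha₂ _ hyB)
        have c0' : j = i₀ ∨ ((j : ℤ) - i₀).natAbs = 1 ∨ ((j : ℤ) - i₀).natAbs = m - 1 := by
          omega
        have c1' : j = i₁ ∨ ((j : ℤ) - i₁).natAbs = 1 ∨ ((j : ℤ) - i₁).natAbs = m - 1 := by
          omega
        rcases hidx j hj.1 hj.2 c0' c1' with rfl | rfl
        · exact Set.mem_insert _ _
        · exact Set.mem_insert_of_mem _ rfl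
    · intro y hy
      rcases hy with rfl | hy
      · exact ⟨hbB, hWX _ hi₀⟩
      · rw [Set.mem_singleton_iff] at hy
        subst hy
        exact ⟨hb₂, hWX _ hi₁⟩

/-- In the four special cases the `D'`-induced operator picks the unique pair at
distance `2.3`. -/
lemma spec {r : ℕ} {A B : Set (𝒜 → T)} (VV WW : ℕ → (𝒜 → T)) {i₀ i₁ : ℕ}
    (h00 : hamD' m p q t0 t1 r (VV i₀) (WW i₀) = ((2.4 : ℝ) : WithTop ℝ))
    (h01 : hamD' m p q t0 t1 r (VV i₀) (WW i₁) = ((2.5 : ℝ) : WithTop ℝ))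
    (h10 : hamD' m p q t0 t1 r (VV i₁) (WW i₀) = ((2.5 : ℝ) : WithTop ℝ))
    (h11 : hamD' m p q t0 t1 r (VV i₁) (WW i₁) = ((2.3 : ℝ) : WithTop ℝ))
    (hmain : ∀ a ∈ A, ∀ b ∈ B, ({a, b} : Set (𝒜 → T)) ⊆ hamX m p q t0 t1 ∨
      (¬ (hamSet a b).Finite ∨ 3 ≤ (hamSet a b).ncard))
    (hA : A ∩ hamX m p q t0 t1 = {VV i₀, VV i₁})
    (hB : B ∩ hamX m p q t0 t1 = {WW i₀, WW i₁}) :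
    inducedOp (· < ·) (hamD' m p q t0 t1 r) A B = {WW i₁} := by
  have haA : VV i₁ ∈ A := by
    have : VV i₁ ∈ A ∩ hamX m p q t0 t1 := by
      rw [hA]; exact Set.mem_insert_of_mem _ rfl
    exact this.1
  have hbB : WW i₁ ∈ B := by
    have : WW i₁ ∈ B ∩ hamX m p q t0 t1 := by
      rw [hB]; exact Set.mem_insert_of_mem _ rfl
    exact this.1
  have key : ∀ a ∈ A, ∀ b ∈ B,
      ((2.3 : ℝ) : WithTop ℝ) ≤ hamD' m p q t0 t1 r a b ∧
      (hamD' m p q t0 t1 r a b = ((2.3 : ℝ) : WithTop ℝ) → b = WW i₁) := by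
    intro a ha b hb
    by_cases hX : ({a, b} : Set (𝒜 → T)) ⊆ hamX m p q t0 t1
    · rw [Set.pair_subset_iff] at hX
      have haX : a ∈ ({VV i₀, VV i₁} : Set (𝒜 → T)) := by rw [← hA]; exact ⟨ha, hX.1⟩
      have hbX : b ∈ ({WW i₀, WW i₁} : Set (𝒜 → T)) := by rw [← hB]; exact ⟨hb, hX.2⟩
      simp only [Set.mem_insert_iff, Set.mem_singleton_iff] at haX hbX
      rcases haX with rfl | rfl <;> rcases hbX with rfl | rfl
      · rw [h00]; exact ⟨wc_le (by norm_num), fun h => absurd h (wc_ne (by norm_num))⟩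
      · rw [h01]; exact ⟨wc_le (by norm_num), fun _ => rfl⟩
      · rw [h10]; exact ⟨wc_le (by norm_num), fun h => absurd h (wc_ne (by norm_num))⟩
      · rw [h11]; exact ⟨le_refl _, fun _ => rfl⟩
    · rcases hmain a ha b hb with hX' | h3
      · exact absurd hX' hX
      · have hge := d_notX_ge3 hX h3
        rw [← d'_notX hX] at hge
        refine ⟨le_trans (wc_le (by norm_num)) hge, fun h => ?_⟩
        rw [h] at hge
        exact absurd hge (not_le.mpr (wc_lt (by norm_num)))
  exact inducedOp_uniq haA hbB h11 (fun a ha b hb => (key a ha b hb).1)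
    (fun a ha b hb => (key a ha b hb).2)

end Gen2
/-- The `r`-modification of the modified Hamming Hamster-Wheel operator is induced by the
`r`-modification of the Hamming Hamster-Wheel pseudo-distance. -/
theorem stmt10 {𝒜 T : Type*} [Countable 𝒜] [Infinite 𝒜]
    (t0 t1 : T) (ht : t0 ≠ t1)
    (m : ℕ) (hm : 4 ≤ m) (p q : ℕ → 𝒜) (hdist : hamDistinctAtoms m p q)
    (r : ℕ) (hr : r ∈ Set.Icc 1 (m - 1)) :
    ∀ A B : Set (𝒜 → T),
      hamOp' m p q t0 t1 r A B = inducedOp (· < ·) (hamD' m p q t0 t1 r) A B := by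
  have hr1 : 1 ≤ r := hr.1
  have hrm : r + 1 ≤ m := by have := hr.2; omega
  have hrI : r ∈ Set.Icc 1 m := ⟨hr1, by omega⟩
  have hr1I : r + 1 ∈ Set.Icc 1 m := ⟨by omega, hrm⟩
  have h1I : 1 ∈ Set.Icc 1 m := ⟨le_refl _, by omega⟩
  have hmI : m ∈ Set.Icc 1 m := ⟨by omega, le_refl _⟩
  intro A B
  simp only [hamOp', hamOp]
  by_cases hmain : ∀ a ∈ A, ∀ b ∈ B, ({a, b} : Set (𝒜 → T)) ⊆ hamX m p q t0 t1 ∨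
      (¬ (hamSet a b).Finite ∨ 3 ≤ (hamSet a b).ncard)
  · rw [if_pos hmain, if_pos hmain]
    by_cases h1 : A ∩ hamX m p q t0 t1 = {unitVal t0 t1 (p r), unitVal t0 t1 (p (r + 1))} ∧
        B ∩ hamX m p q t0 t1 = {unitVal t0 t1 (q r), unitVal t0 t1 (q (r + 1))}
    · rw [if_pos h1]
      refine (spec (fun j => unitVal t0 t1 (p j)) (fun j => unitVal t0 t1 (q j))
        (i₀ := r) (i₁ := r + 1) ?_ ?_ ?_ ?_ hmain h1.1 h1.2).symm
      · rw [d'_vw ht hdist hr1 hrI hrI, if_neg (by omega), d_vw ht hdist hrI hrI, if_pos rfl]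
      · rw [d'_vw ht hdist hr1 hrI hr1I, if_neg (by omega), d_vw ht hdist hrI hr1I,
          if_neg (by omega), if_pos (show (((r : ℤ) - (r + 1 : ℕ)).natAbs ∈
            ({1, m - 1} : Set ℕ)) by
            simp only [Set.mem_insert_iff, Set.mem_singleton_iff]; omega)]
      · rw [d'_vw ht hdist hr1 hr1I hrI, if_neg (by omega), d_vw ht hdist hr1I hrI,
          if_neg (by omega), if_pos (show ((((r + 1 : ℕ) : ℤ) - r).natAbs ∈
            ({1, m - 1} : Set ℕ)) by
            simp only [Set.mem_insert_iff, Set.mem_singleton_iff]; omega)]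
      · rw [d'_vw ht hdist hr1 hr1I hr1I, if_pos ⟨rfl, le_refl _⟩]
    rw [if_neg h1]
    by_cases h2 : A ∩ hamX m p q t0 t1 = {unitVal t0 t1 (q r), unitVal t0 t1 (q (r + 1))} ∧
        B ∩ hamX m p q t0 t1 = {unitVal t0 t1 (p r), unitVal t0 t1 (p (r + 1))}
    · rw [if_pos h2]
      refine (spec (fun j => unitVal t0 t1 (q j)) (fun j => unitVal t0 t1 (p j))
        (i₀ := r) (i₁ := r + 1) ?_ ?_ ?_ ?_ hmain h2.1 h2.2).symm
      · rw [d'_wv ht hdist hr1 hrI hrI, if_neg (by omega), d_wv ht hdist hrI hrI, if_pos rfl]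
      · rw [d'_wv ht hdist hr1 hrI hr1I, if_neg (by omega), d_wv ht hdist hrI hr1I,
          if_neg (by omega), if_pos (show (((r : ℤ) - (r + 1 : ℕ)).natAbs ∈
            ({1, m - 1} : Set ℕ)) by
            simp only [Set.mem_insert_iff, Set.mem_singleton_iff]; omega)]
      · rw [d'_wv ht hdist hr1 hr1I hrI, if_neg (by omega), d_wv ht hdist hr1I hrI,
          if_neg (by omega), if_pos (show ((((r + 1 : ℕ) : ℤ) - r).natAbs ∈
            ({1, m - 1} : Set ℕ)) by
            simp only [Set.mem_insert_iff, Set.mem_singleton_iff]; omega)]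
      · rw [d'_wv ht hdist hr1 hr1I hr1I, if_pos ⟨rfl, le_refl _⟩]
    rw [if_neg h2]
    by_cases h3 : A ∩ hamX m p q t0 t1 = {unitVal t0 t1 (p m), unitVal t0 t1 (p 1)} ∧
        B ∩ hamX m p q t0 t1 = {unitVal t0 t1 (q m), unitVal t0 t1 (q 1)}
    · rw [if_pos h3]
      refine (spec (fun j => unitVal t0 t1 (p j)) (fun j => unitVal t0 t1 (q j))
        (i₀ := 1) (i₁ := m) ?_ ?_ ?_ ?_ hmain
        (h3.1.trans (Set.pair_comm _ _)) (h3.2.trans (Set.pair_comm _ _))).symm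
      · rw [d'_vw ht hdist hr1 h1I h1I, if_neg (by omega), d_vw ht hdist h1I h1I, if_pos rfl]
      · rw [d'_vw ht hdist hr1 h1I hmI, if_neg (by omega), d_vw ht hdist h1I hmI,
          if_neg (by omega), if_pos (show ((((1 : ℕ) : ℤ) - m).natAbs ∈
            ({1, m - 1} : Set ℕ)) by
            simp only [Set.mem_insert_iff, Set.mem_singleton_iff]; omega)]
      · rw [d'_vw ht hdist hr1 hmI h1I, if_neg (by omega), d_vw ht hdist hmI h1I,
          if_neg (by omega), if_pos (show (((m : ℤ) - (1 : ℕ)).natAbs ∈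
            ({1, m - 1} : Set ℕ)) by
            simp only [Set.mem_insert_iff, Set.mem_singleton_iff]; omega)]
      · rw [d'_vw ht hdist hr1 hmI hmI, if_pos ⟨rfl, hrm⟩]
    rw [if_neg h3]
    by_cases h4 : A ∩ hamX m p q t0 t1 = {unitVal t0 t1 (q m), unitVal t0 t1 (q 1)} ∧
        B ∩ hamX m p q t0 t1 = {unitVal t0 t1 (p m), unitVal t0 t1 (p 1)}
    · rw [if_pos h4]
      refine (spec (fun j => unitVal t0 t1 (q j)) (fun j => unitVal t0 t1 (p j))
        (i₀ := 1) (i₁ := m) ?_ ?_ ?_ ?_ hmain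
        (h4.1.trans (Set.pair_comm _ _)) (h4.2.trans (Set.pair_comm _ _))).symm
      · rw [d'_wv ht hdist hr1 h1I h1I, if_neg (by omega), d_wv ht hdist h1I h1I, if_pos rfl]
      · rw [d'_wv ht hdist hr1 h1I hmI, if_neg (by omega), d_wv ht hdist h1I hmI,
          if_neg (by omega), if_pos (show ((((1 : ℕ) : ℤ) - m).natAbs ∈
            ({1, m - 1} : Set ℕ)) by
            simp only [Set.mem_insert_iff, Set.mem_singleton_iff]; omega)]
      · rw [d'_wv ht hdist hr1 hmI h1I, if_neg (by omega), d_wv ht hdist hmI h1I,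
          if_neg (by omega), if_pos (show (((m : ℤ) - (1 : ℕ)).natAbs ∈
            ({1, m - 1} : Set ℕ)) by
            simp only [Set.mem_insert_iff, Set.mem_singleton_iff]; omega)]
      · rw [d'_wv ht hdist hr1 hmI hmI, if_pos ⟨rfl, hrm⟩]
    rw [if_neg h4]
    -- generic case: show the two induced operators coincide
    by_cases hch : ∃ a ∈ A, ∃ b ∈ B, hamD' m p q t0 t1 r a b ≠ hamD m p q t0 t1 a b
    swap
    · push_neg at hch
      exact inducedOp_congr (fun a ha b hb => (hch a ha b hb).symm)
    obtain ⟨a₂, ha₂, b₂, hb₂, hch₂⟩ := hch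
    obtain ⟨i₂, hi₂1, hi₂2, hor₂, h24₂, h23₂⟩ := d_changed ht hdist hr1 hch₂
    by_cases hlow : ∃ a ∈ A, ∃ b ∈ B, hamD m p q t0 t1 a b < ((2.3 : ℝ) : WithTop ℝ)
    · obtain ⟨a₀, ha₀, b₀, hb₀, hl⟩ := hlow
      refine inducedOp_low ha₀ hb₀ ?_ hl ?_
      · by_contra hne
        obtain ⟨i, _, _, _, h24, _⟩ := d_changed ht hdist hr1 (Ne.symm hne)
        rw [h24] at hl
        exact absurd hl (not_lt.mpr (wc_le (by norm_num)))
      · intro a ha b hb hne'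
        obtain ⟨i, _, _, _, h24, h23⟩ := d_changed ht hdist hr1 (Ne.symm hne')
        rw [h24, h23]
        exact ⟨wc_le (by norm_num), le_refl _⟩
    · push_neg at hlow
      refine inducedOp_high ha₂ hb₂ (wc_lt (by norm_num : (2.3 : ℝ) < 2.4)) h24₂ ?_ ?_
      · -- hiff
        intro a ha b hb
        constructor
        · intro h24
          obtain ⟨i, hi, hor⟩ := d24_pair ht hdist (hmain a ha b hb) h24
          by_cases hri : r + 1 ≤ i
          · rcases hor with ⟨rfl, rfl⟩ | ⟨rfl, rfl⟩
            · rw [d'_vw ht hdist hr1 hi hi, if_pos ⟨rfl, hri⟩]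
            · rw [d'_wv ht hdist hr1 hi hi, if_pos ⟨rfl, hri⟩]
          · exfalso
            have hii₂ : i ≠ i₂ := by omega
            rcases hor with ⟨rfl, rfl⟩ | ⟨rfl, rfl⟩ <;>
              rcases hor₂ with ⟨he₂a, he₂b⟩ | ⟨he₂a, he₂b⟩ <;> subst he₂a <;> subst he₂b
            · -- both orientation v→w
              have hi₂I : i₂ ∈ Set.Icc 1 m := ⟨by omega, hi₂2⟩
              have hcross := hlow _ ha _ hb₂
              rw [d_vw ht hdist hi hi₂I, if_neg hii₂] at hcross
              have habs : ((i : ℤ) - i₂).natAbs ∈ ({1, m - 1} : Set ℕ) := by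
                by_contra hab
                rw [if_neg hab] at hcross
                exact absurd hcross (not_le.mpr (wc_lt (by norm_num)))
              simp only [Set.mem_insert_iff, Set.mem_singleton_iff] at habs
              have hcases : (i = r ∧ i₂ = r + 1) ∨ (i = 1 ∧ i₂ = m) := by
                have hx1 := hi.1; have hx2 := hi.2; omega
              have hnl : ∀ a ∈ A, ∀ b ∈ B,
                  ¬ hamD m p q t0 t1 a b < ((2.3 : ℝ) : WithTop ℝ) :=
                fun a ha b hb => not_lt.mpr (hlow a ha b hb)
              rcases hcases with ⟨rfl, rfl⟩ | ⟨rfl, rfl⟩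
              · exact h1 (interX_eq (fun j => unitVal t0 t1 (p j))
                  (fun j => unitVal t0 t1 (q j)) hi hi₂I
                  (fun j hj => v_mem_X hj) (fun j hj => w_mem_X hj)
                  (fun x hx => let ⟨j, hj, h⟩ := hx; ⟨j, hj, h⟩)
                  (fun j k hj hk hjk => d_vv ht hdist hj hk hjk)
                  (fun j k hj hk hjk => d_ww ht hdist hj hk hjk)
                  (fun j k hj hk => d_vw ht hdist hj hk)
                  hnl ha ha₂ hb hb₂ (by omega))
              · exact h3 (by
                  obtain ⟨hA', hB'⟩ := interX_eq (fun j => unitVal t0 t1 (p j))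
                    (fun j => unitVal t0 t1 (q j)) hi hi₂I
                    (fun j hj => v_mem_X hj) (fun j hj => w_mem_X hj)
                    (fun x hx => let ⟨j, hj, h⟩ := hx; ⟨j, hj, h⟩)
                    (fun j k hj hk hjk => d_vv ht hdist hj hk hjk)
                    (fun j k hj hk hjk => d_ww ht hdist hj hk hjk)
                    (fun j k hj hk => d_vw ht hdist hj hk)
                    hnl ha ha₂ hb hb₂ (by omega)
                  exact ⟨hA'.trans (Set.pair_comm _ _), hB'.trans (Set.pair_comm _ _)⟩)
            · -- a = v i, a₂ = w i₂ : pair (a, b₂) = (v i, v i₂) has value 2.1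
              have hi₂I : i₂ ∈ Set.Icc 1 m := ⟨by omega, hi₂2⟩
              have hcross := hlow _ ha _ hb₂
              rw [d_vv ht hdist hi hi₂I hii₂] at hcross
              exact absurd hcross (not_le.mpr (wc_lt (by norm_num)))
            · -- a = w i, a₂ = v i₂ : pair (a, b₂) = (w i, w i₂) has value 2.1
              have hi₂I : i₂ ∈ Set.Icc 1 m := ⟨by omega, hi₂2⟩
              have hcross := hlow _ ha _ hb₂
              rw [d_ww ht hdist hi hi₂I hii₂] at hcross
              exact absurd hcross (not_le.mpr (wc_lt (by norm_num)))
            · -- both orientation w→v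
              have hi₂I : i₂ ∈ Set.Icc 1 m := ⟨by omega, hi₂2⟩
              have hcross := hlow _ ha _ hb₂
              rw [d_wv ht hdist hi hi₂I, if_neg hii₂] at hcross
              have habs : ((i : ℤ) - i₂).natAbs ∈ ({1, m - 1} : Set ℕ) := by
                by_contra hab
                rw [if_neg hab] at hcross
                exact absurd hcross (not_le.mpr (wc_lt (by norm_num)))
              simp only [Set.mem_insert_iff, Set.mem_singleton_iff] at habs
              have hcases : (i = r ∧ i₂ = r + 1) ∨ (i = 1 ∧ i₂ = m) := by
                have hx1 := hi.1; have hx2 := hi.2; omega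
              have hnl : ∀ a ∈ A, ∀ b ∈ B,
                  ¬ hamD m p q t0 t1 a b < ((2.3 : ℝ) : WithTop ℝ) :=
                fun a ha b hb => not_lt.mpr (hlow a ha b hb)
              rcases hcases with ⟨rfl, rfl⟩ | ⟨rfl, rfl⟩
              · exact h2 (interX_eq (fun j => unitVal t0 t1 (q j))
                  (fun j => unitVal t0 t1 (p j)) hi hi₂I
                  (fun j hj => w_mem_X hj) (fun j hj => v_mem_X hj)
                  (fun x hx => let ⟨j, hj, h⟩ := hx; ⟨j, hj, h.symm⟩)
                  (fun j k hj hk hjk => d_ww ht hdist hj hk hjk)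
                  (fun j k hj hk hjk => d_vv ht hdist hj hk hjk)
                  (fun j k hj hk => d_wv ht hdist hj hk)
                  hnl ha ha₂ hb hb₂ (by omega))
              · exact h4 (by
                  obtain ⟨hA', hB'⟩ := interX_eq (fun j => unitVal t0 t1 (q j))
                    (fun j => unitVal t0 t1 (p j)) hi hi₂I
                    (fun j hj => w_mem_X hj) (fun j hj => v_mem_X hj)
                    (fun x hx => let ⟨j, hj, h⟩ := hx; ⟨j, hj, h.symm⟩)
                    (fun j k hj hk hjk => d_ww ht hdist hj hk hjk)
                    (fun j k hj hk hjk => d_vv ht hdist hj hk hjk)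
                    (fun j k hj hk => d_wv ht hdist hj hk)
                    hnl ha ha₂ hb hb₂ (by omega)
                  exact ⟨hA'.trans (Set.pair_comm _ _), hB'.trans (Set.pair_comm _ _)⟩)
        · intro h23
          by_cases hc : hamD' m p q t0 t1 r a b = hamD m p q t0 t1 a b
          · exfalso
            rw [hc] at h23
            have hne : a ≠ b := by
              rintro rfl
              rw [d_self] at h23
              exact wc_ne (show (2.3 : ℝ) ≠ 0 by norm_num)
                (h23.symm.trans WithTop.coe_zero.symm)
            rcases d_val ht hdist (hmain a ha b hb) hne with h | h | h | h | h
            · exact wc_ne (by norm_num) (h23.symm.trans h).symm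
            · exact wc_ne (by norm_num) (h23.symm.trans h).symm
            · exact wc_ne (by norm_num) (h23.symm.trans h).symm
            · exact wc_ne (by norm_num) (h23.symm.trans h).symm
            · rw [h23] at h
              exact absurd h (not_le.mpr (wc_lt (by norm_num)))
          · exact (d_changed ht hdist hr1 hc).choose_spec.2.2.2.1
      · -- hother
        intro a ha b hb hne24
        have hne : a ≠ b := by
          rintro rfl
          have hge := hlow a ha a hb
          rw [d_self] at hge
          exact absurd hge (not_le.mpr zero_lt_23)
        have hge := hlow a ha b hb
        have hunch : hamD m p q t0 t1 a b ≠ ((2.4 : ℝ) : WithTop ℝ) →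
            hamD' m p q t0 t1 r a b = hamD m p q t0 t1 a b := by
          intro hn
          by_contra hc
          exact hn (d_changed ht hdist hr1 hc).choose_spec.2.2.2.1
        rcases d_val ht hdist (hmain a ha b hb) hne with h | h | h | h | h
        · rw [h] at hge; exact absurd hge (not_le.mpr (wc_lt (by norm_num)))
        · rw [h] at hge; exact absurd hge (not_le.mpr (wc_lt (by norm_num)))
        · exact absurd h hne24
        · exact ⟨h ▸ wc_lt (by norm_num), hunch (h ▸ wc_ne (by norm_num))⟩
        · exact ⟨lt_of_lt_of_le (wc_lt (by norm_num)) h,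
            hunch (fun hc => absurd (hc ▸ h) (not_le.mpr (wc_lt (by norm_num))))⟩
  · rw [if_neg hmain, if_neg hmain]
    push_neg at hmain
    obtain ⟨a₀, ha₀, b₀, hb₀, hnX, hfin, hnc⟩ := hmain
    refine inducedOp_low (c := ((2.3 : ℝ) : WithTop ℝ)) ha₀ hb₀ (d'_notX hnX).symm ?_ ?_
    · by_cases heq : a₀ = b₀
      · subst heq; rw [d_self]; exact zero_lt_23
      · rw [d_notX hnX heq, if_pos hfin]
        by_cases hc1 : (hamSet a₀ b₀).ncard = 1
        · rw [if_pos hc1]; exact wc_lt (by norm_num)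
        · rw [if_neg hc1]
          exact WithTop.coe_lt_coe.mpr (by
            have : ((hamSet a₀ b₀).ncard : ℝ) ≤ 2 := by exact_mod_cast (by omega :
              (hamSet a₀ b₀).ncard ≤ 2)
            linarith)
    · intro a ha b hb hne'
      obtain ⟨i, _, _, _, h24, h23⟩ := d_changed ht hdist hr1 (Ne.symm hne')
      rw [h24, h23]
      exact ⟨wc_le (by norm_num), le_refl _⟩
end

section
/- In the Hamming Hamster-Wheel setting with r ∈ [1, m−1], the r-modification D' of the Hamming Hamster-Wheel pseudo-distance is Hamming-inequality respecting: for all valuations v, w, x ∈ 𝒱, if |h(v,w)| < |h(v,x)| (as cardinals), then d'(v,w) ≺ d'(v,x). -/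
section Aux

variable {𝒜 T : Type*}

lemma unitVal_inj {t0 t1 : T} (ht : t0 ≠ t1) {a b : 𝒜}
    (h : unitVal t0 t1 a = unitVal t0 t1 b) : a = b := by
  by_contra hne
  have h2 := congrFun h a
  simp only [unitVal, if_pos rfl, if_neg hne] at h2
  exact ht h2.symm

lemma hamSet_unitVal {t0 t1 : T} (ht : t0 ≠ t1) {a b : 𝒜} (hab : a ≠ b) :
    hamSet (unitVal t0 t1 a) (unitVal t0 t1 b) = {a, b} := by
  ext y
  simp only [hamSet, Set.mem_setOf_eq, unitVal, Set.mem_insert_iff, Set.mem_singleton_iff]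
  rcases eq_or_ne y a with rfl | hya
  · simp [hab, Ne.symm ht]
  · rcases eq_or_ne y b with rfl | hyb
    · simp [hya, ht]
    · simp [hya, hyb]

lemma hamX_unitVal {m : ℕ} {p q : ℕ → 𝒜} {t0 t1 : T} {x : 𝒜 → T}
    (hx : x ∈ hamX m p q t0 t1) : ∃ s, x = unitVal t0 t1 s := by
  obtain ⟨i, _, h | h⟩ := hx
  exacts [⟨p i, h⟩, ⟨q i, h⟩]

lemma pair_hamX_card {m : ℕ} {p q : ℕ → 𝒜} {t0 t1 : T} (ht : t0 ≠ t1) {a b : 𝒜 → T}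
    (ha : a ∈ hamX m p q t0 t1) (hb : b ∈ hamX m p q t0 t1) (hne : a ≠ b) :
    (hamSet a b).Finite ∧ (hamSet a b).ncard = 2 := by
  obtain ⟨s, rfl⟩ := hamX_unitVal ha
  obtain ⟨s', rfl⟩ := hamX_unitVal hb
  have hss : s ≠ s' := fun h => hne (by rw [h])
  rw [hamSet_unitVal ht hss]
  exact ⟨(Set.finite_singleton s').insert s, Set.ncard_pair hss⟩

/-- The three possible shapes of `hamD'` for distinct arguments. -/
lemma hamD'_cases {m : ℕ} {p q : ℕ → 𝒜} {t0 t1 : T} (ht : t0 ≠ t1)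
    (hdist : hamDistinctAtoms m p q) (r : ℕ) (a b : 𝒜 → T) (hne : a ≠ b) :
    (¬ (hamSet a b).Finite ∧ hamD' m p q t0 t1 r a b = ⊤) ∨
    ((hamSet a b).Finite ∧
      (((hamSet a b).ncard = 1 ∧ hamD' m p q t0 t1 r a b = ((1.4 : ℝ) : WithTop ℝ)) ∨
       ((hamSet a b).ncard = 2 ∧ ((2 : ℝ) : WithTop ℝ) ≤ hamD' m p q t0 t1 r a b ∧
          hamD' m p q t0 t1 r a b ≤ ((2.5 : ℝ) : WithTop ℝ)) ∨
       (3 ≤ (hamSet a b).ncard ∧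
          hamD' m p q t0 t1 r a b = (((hamSet a b).ncard : ℝ) : WithTop ℝ)))) := by
  unfold hamD'
  split
  · -- 2.3 case
    rename_i hx
    obtain ⟨i, hi, hpair⟩ := hx
    have hi' : i ∈ Set.Icc 1 m := ⟨le_trans (Nat.le_add_left 1 r) hi.1, hi.2⟩
    have hpq : unitVal t0 t1 (p i) ≠ unitVal t0 t1 (q i) := by
      intro h
      exact hdist.1 i hi' i hi' (unitVal_inj ht h)
    have hX : unitVal t0 t1 (p i) ∈ hamX m p q t0 t1 := ⟨i, hi', Or.inl rfl⟩
    have hX' : unitVal t0 t1 (q i) ∈ hamX m p q t0 t1 := ⟨i, hi', Or.inr rfl⟩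
    rcases Set.pair_eq_pair_iff.mp hpair with ⟨h1, h2⟩ | ⟨h1, h2⟩ <;>
    · subst h1; subst h2
      refine Or.inr ⟨(pair_hamX_card ht (by assumption) (by assumption) hne).1,
        Or.inr (Or.inl ⟨(pair_hamX_card ht (by assumption) (by assumption) hne).2, ?_, ?_⟩)⟩ <;>
      · rw [show ((2.3 : ℝ) : WithTop ℝ) = ((2.3 : ℝ) : WithTop ℝ) from rfl]
        exact_mod_cast by norm_num
  · -- hamD case
    unfold hamD
    rw [if_neg hne]
    split
    · -- pair in X
      rename_i hsub
      have ha : a ∈ hamX m p q t0 t1 := hsub (Set.mem_insert _ _)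
      have hb : b ∈ hamX m p q t0 t1 := hsub (Set.mem_insert_of_mem _ rfl)
      obtain ⟨hfin, hcard⟩ := pair_hamX_card ht ha hb hne
      refine Or.inr ⟨hfin, Or.inr (Or.inl ⟨hcard, ?_⟩)⟩
      split
      · constructor <;> exact_mod_cast by norm_num
      · split
        · constructor <;> exact_mod_cast by norm_num
        · split
          · constructor <;> exact_mod_cast by norm_num
          · constructor <;> exact_mod_cast by norm_num
    · split
      · -- finite
        rename_i hfin
        refine Or.inr ⟨hfin, ?_⟩
        have hpos : 0 < (hamSet a b).ncard := by
          rw [Set.ncard_pos hfin]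
          obtain ⟨y, hy⟩ := Function.ne_iff.mp hne
          exact ⟨y, hy⟩
        split
        · rename_i h1
          exact Or.inl ⟨h1, rfl⟩
        · rename_i h1
          rcases eq_or_ne (hamSet a b).ncard 2 with h2 | h2
          · refine Or.inr (Or.inl ⟨h2, ?_, ?_⟩) <;>
            · rw [h2]; exact_mod_cast by norm_num
          · refine Or.inr (Or.inr ⟨?_, rfl⟩)
            omega
      · exact Or.inl ⟨by assumption, rfl⟩

lemma hamD'_self {m : ℕ} {p q : ℕ → 𝒜} {t0 t1 : T} (ht : t0 ≠ t1)
    (hdist : hamDistinctAtoms m p q) (r : ℕ) (a : 𝒜 → T) :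
    hamD' m p q t0 t1 r a a = 0 := by
  unfold hamD'
  rw [if_neg, hamD, if_pos rfl]
  rintro ⟨i, hi, hpair⟩
  have hi' : i ∈ Set.Icc 1 m := ⟨le_trans (Nat.le_add_left 1 r) hi.1, hi.2⟩
  have h1 : unitVal t0 t1 (p i) ∈ ({a, a} : Set (𝒜 → T)) := by
    rw [hpair]; exact Set.mem_insert _ _
  have h2 : unitVal t0 t1 (q i) ∈ ({a, a} : Set (𝒜 → T)) := by
    rw [hpair]; exact Set.mem_insert_of_mem _ rfl
  simp only [Set.mem_insert_iff, Set.mem_singleton_iff, or_self] at h1 h2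
  exact hdist.1 i hi' i hi' (unitVal_inj ht (h1.trans h2.symm))

end Aux

/-- The `r`-modification of the Hamming Hamster-Wheel pseudo-distance is
Hamming-inequality respecting: if `|h(v,w)| < |h(v,x)|` as cardinals, then
`d'(v,w) ≺ d'(v,x)`. -/
theorem stmt11 {𝒜 T : Type*} [Countable 𝒜] [Infinite 𝒜]
    (t0 t1 : T) (ht : t0 ≠ t1)
    (m : ℕ) (hm : 4 ≤ m) (p q : ℕ → 𝒜) (hdist : hamDistinctAtoms m p q)
    (r : ℕ) (hr : r ∈ Set.Icc 1 (m - 1)) :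
    ∀ v w x : 𝒜 → T, Cardinal.mk (hamSet v w) < Cardinal.mk (hamSet v x) →
      hamD' m p q t0 t1 r v w < hamD' m p q t0 t1 r v x := by
  
  intro v w x hcard
  -- v ≠ x since the right-hand cardinal is positive
  have hvx : v ≠ x := by
    rintro rfl
    have : hamSet v v = (∅ : Set 𝒜) := by
      ext y; simp [hamSet]
    rw [this] at hcard
    simp at hcard
  -- hamSet v w is finite (everything is at most countable)
  have hfinvw : (hamSet v w).Finite := by
    by_contra hinf
    have h1 : Cardinal.aleph0 ≤ Cardinal.mk (hamSet v w) :=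
      Cardinal.infinite_iff.mp ((Set.infinite_coe_iff).mpr hinf)
    have h2 : Cardinal.mk (hamSet v x) ≤ Cardinal.aleph0 := Cardinal.mk_le_aleph0
    exact absurd hcard (not_lt.mpr (h2.trans h1))
  rcases eq_or_ne v w with rfl | hvw
  · -- left side is 0
    rw [hamD'_self ht hdist]
    rcases hamD'_cases ht hdist r v x hvx with ⟨_, hval⟩ | ⟨_, hc⟩
    · rw [hval]; exact_mod_cast WithTop.coe_lt_top (0 : ℝ)
    · rcases hc with ⟨_, hval⟩ | ⟨_, hle, _⟩ | ⟨h3, hval⟩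
      · rw [hval]; exact_mod_cast by norm_num
      · refine lt_of_lt_of_le ?_ hle
        exact_mod_cast by norm_num
      · rw [hval]
        have h0 : (0 : ℝ) < ((hamSet v x).ncard : ℝ) := by
          have h3' : (3 : ℝ) ≤ ((hamSet v x).ncard : ℝ) := by exact_mod_cast h3
          linarith
        exact_mod_cast h0
  · -- both sides nonzero
    rcases hamD'_cases ht hdist r v w hvw with ⟨hinf, _⟩ | ⟨_, hcw⟩
    · exact absurd hfinvw hinf
    -- get an upper bound for the left value and the left ncard
    have hxcase := hamD'_cases ht hdist r v x hvx
    rcases hxcase with ⟨hinfx, hvalx⟩ | ⟨hfinx, hcx⟩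
    · -- right side is ⊤; left side is a real
      rw [hvalx]
      rcases hcw with ⟨_, hval⟩ | ⟨_, _, hle⟩ | ⟨_, hval⟩
      · rw [hval]; exact WithTop.coe_lt_top _
      · exact lt_of_le_of_lt hle (WithTop.coe_lt_top _)
      · rw [hval]; exact WithTop.coe_lt_top _
    · -- both finite: compare ncards
      have hncard : (hamSet v w).ncard < (hamSet v x).ncard := by
        have e1 : ((hamSet v w).ncard : Cardinal) = Cardinal.mk (hamSet v w) := by
          rw [← Nat.card_coe_set_eq, Nat.card]
          exact Cardinal.cast_toNat_of_lt_aleph0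
            (Cardinal.mk_lt_aleph0_iff.mpr hfinvw.to_subtype)
        have e2 : ((hamSet v x).ncard : Cardinal) = Cardinal.mk (hamSet v x) := by
          rw [← Nat.card_coe_set_eq, Nat.card]
          exact Cardinal.cast_toNat_of_lt_aleph0
            (Cardinal.mk_lt_aleph0_iff.mpr hfinx.to_subtype)
        rw [← e1, ← e2] at hcard
        exact_mod_cast hcard
      rcases hcw with ⟨hn1, hval1⟩ | ⟨hn1, _, hle1⟩ | ⟨hn1, hval1⟩
      · -- left ncard = 1, value 1.4
        rw [hval1]
        rcases hcx with ⟨hn2, _⟩ | ⟨hn2, hge2, _⟩ | ⟨hn2, hval2⟩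
        · omega
        · refine lt_of_lt_of_le ?_ hge2
          exact_mod_cast by norm_num
        · rw [hval2]
          have : (1.4 : ℝ) < ((hamSet v x).ncard : ℝ) := by
            have : (3 : ℝ) ≤ ((hamSet v x).ncard : ℝ) := by exact_mod_cast hn2
            linarith
          exact_mod_cast this
      · -- left ncard = 2, value ≤ 2.5
        rcases hcx with ⟨hn2, _⟩ | ⟨hn2, _, _⟩ | ⟨hn2, hval2⟩
        · omega
        · omega
        · refine lt_of_le_of_lt hle1 ?_
          rw [hval2]
          have : (2.5 : ℝ) < ((hamSet v x).ncard : ℝ) := by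
            have : (3 : ℝ) ≤ ((hamSet v x).ncard : ℝ) := by exact_mod_cast hn2
            linarith
          exact_mod_cast this
      · -- left ncard ≥ 3, value = ncard
        rw [hval1]
        rcases hcx with ⟨hn2, _⟩ | ⟨hn2, _, _⟩ | ⟨hn2, hval2⟩
        · omega
        · omega
        · rw [hval2]
          have : ((hamSet v w).ncard : ℝ) < ((hamSet v x).ncard : ℝ) := by
            exact_mod_cast hncard
          exact_mod_cast this
end
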